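/- If P(s',w|s) is a conditional probability distribution over finite sets satisfying ∑_{s,w} P(s',w|s)·exp(β(E_{s'} − E_s + w)) = 1 for all s', and the initial state is thermal, i.e. P(s) = exp(−β·E_s)/Z_S with Z_S = ∑_s exp(−β·E_s), then the standard Jarzynski equality holds: ∑_{s,s',w} P(s)·P(s',w|s)·exp(β·w) = Z'_S / Z_S, where Z'_S = ∑_{s'} exp(−β·E_{s'}). -/

import Mathlib

open Real Finset

/-- Standard Jarzynski equality for an initially thermal state:
`⟨exp (β w)⟩ = Z'_S / Z_S`. -/
theorem standard_jarzynski
    {S S' W : Type*} [Fintype S] [Fintype S'] [Fintype W]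
    (E : S → ℝ) (E' : S' → ℝ) (wv : W → ℝ) (β : ℝ) (hβ : 0 < β)
    (P : S' → W → S → ℝ)
    (hPnn : ∀ s' w s, 0 ≤ P s' w s)
    (hPnorm : ∀ s, ∑ s', ∑ w, P s' w s = 1)
    (hGibbs : ∀ s', ∑ s, ∑ w, P s' w s * Real.exp (β * (E' s' - E s + wv w)) = 1)
    (Z : ℝ) (hZ : Z = ∑ s, Real.exp (-β * E s))
    (p : S → ℝ) (hp : ∀ s, p s = Real.exp (-β * E s) / Z) :
    ∑ s, ∑ s', ∑ w, p s * P s' w s * Real.exp (β * wv w) =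
      (∑ s', Real.exp (-β * E' s')) / Z := by
  rcases isEmpty_or_nonempty S with hS | hS
  · simp [hZ]
  · have hZpos : 0 < Z := by
      rw [hZ]; exact Finset.sum_pos (fun s _ => Real.exp_pos _) univ_nonempty
    have key : ∀ s s' w, p s * P s' w s * Real.exp (β * wv w)
        = Real.exp (-β * E' s') * (P s' w s * Real.exp (β * (E' s' - E s + wv w))) / Z := by
      intro s s' w
      have hexp : Real.exp (-β * E s) * Real.exp (β * wv w)
          = Real.exp (-β * E' s') * Real.exp (β * (E' s' - E s + wv w)) := by
        rw [← Real.exp_add, ← Real.exp_add]; ring_nf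
      rw [hp]
      ring_nf at hexp
      field_simp
      ring_nf
      linear_combination (P s' w s) * hexp
    calc ∑ s, ∑ s', ∑ w, p s * P s' w s * Real.exp (β * wv w)
        = ∑ s, ∑ s', ∑ w, Real.exp (-β * E' s') *
            (P s' w s * Real.exp (β * (E' s' - E s + wv w))) / Z := by
          simp only [key]
      _ = (∑ s', Real.exp (-β * E' s') *
            (∑ s, ∑ w, P s' w s * Real.exp (β * (E' s' - E s + wv w)))) / Z := by
          rw [Finset.sum_comm]
          simp only [← Finset.sum_div, Finset.mul_sum]
      _ = (∑ s', Real.exp (-β * E' s')) / Z := by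
          simp only [hGibbs, mul_one]
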